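/- Let h>0, α,β∈(0,1], d≥1, f: ℕ×ℝ^d→ℝ^d and x_a, x_0∈ℝ^d, and let X be the unique solution of the sequential Caputo initial value problem. Then the first Caputo difference of X satisfies, for every n∈ℕ, (C_α X)(n) = x_0 + h^β·∑_{r=0}^{n−1} c_β(n−1−r)·f(r, X(r)), where the sum is empty for n=0. -/

import Mathlib

/-- `c γ m = Γ(γ+m)/(Γ(γ)·Γ(m+1))`. -/
noncomputable def cCoeff (γ : ℝ) (m : ℕ) : ℝ :=
  Real.Gamma (γ + m) / (Real.Gamma γ * Real.Gamma (m + 1))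

lemma gamma_ne (γ : ℝ) (hγ : 0 < γ) : Real.Gamma γ ≠ 0 := (Real.Gamma_pos_of_pos hγ).ne'
lemma gamma_nat_ne (m : ℕ) : Real.Gamma ((m:ℝ)+1) ≠ 0 := gamma_ne _ (by positivity)
lemma cCoeff_zero (γ : ℝ) (hγ : 0 < γ) : cCoeff γ 0 = 1 := by
  simp [cCoeff, Real.Gamma_one, div_self (gamma_ne γ hγ)]
lemma cCoeff_one (m : ℕ) : cCoeff 1 m = 1 := by
  simp [cCoeff, Real.Gamma_one, add_comm (1:ℝ) (m:ℝ), div_self (gamma_nat_ne m)]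
lemma cCoeff_succ (γ : ℝ) (hγ : 0 < γ) (k : ℕ) :
    ((k:ℝ)+1) * cCoeff γ (k+1) = γ * cCoeff (γ+1) k := by
  have h1 : Real.Gamma ((k:ℝ)+1+1) = ((k:ℝ)+1) * Real.Gamma ((k:ℝ)+1) :=
    Real.Gamma_add_one (by positivity)
  have h2 : Real.Gamma (γ+1) = γ * Real.Gamma γ := Real.Gamma_add_one hγ.ne'
  have g1 := gamma_ne γ hγ
  have g2 := gamma_nat_ne k
  have hk : ((k:ℝ)+1) ≠ 0 := by positivity
  simp only [cCoeff, Nat.cast_add, Nat.cast_one]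
  rw [show γ + ((k:ℝ)+1) = γ+1+(k:ℝ) by ring, h1, h2]
  field_simp

lemma cCoeff_conv (m : ℕ) : ∀ γ δ : ℝ, 0 < γ → 0 < δ →
    ∑ k ∈ Finset.range (m+1), cCoeff γ k * cCoeff δ (m-k) = cCoeff (γ+δ) m := by
  induction m with
  | zero =>
    intro γ δ hγ hδ
    simp [cCoeff_zero _ hγ, cCoeff_zero _ hδ, cCoeff_zero _ (by positivity : (0:ℝ) < γ+δ)]
  | succ m ih =>
    intro γ δ hγ hδ
    apply mul_left_cancel₀ (show ((m:ℝ)+1) ≠ 0 by positivity)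
    rw [Finset.mul_sum]
    have split : ∀ k ∈ Finset.range (m+2),
        ((m:ℝ)+1) * (cCoeff γ k * cCoeff δ (m+1-k))
          = (k:ℝ) * (cCoeff γ k * cCoeff δ (m+1-k))
            + ((m+1-k : ℕ):ℝ) * (cCoeff γ k * cCoeff δ (m+1-k)) := by
      intro k hk
      have hk' : k ≤ m+1 := by
        have := Finset.mem_range.mp hk; omega
      have hc : ((k:ℝ) + ((m+1-k:ℕ):ℝ)) = (m:ℝ)+1 := by
        have h := Nat.add_sub_cancel' hk'
        exact_mod_cast congrArg (Nat.cast (R := ℝ)) h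
      rw [← hc]; ring
    rw [Finset.sum_congr rfl split, Finset.sum_add_distrib]
    have hA : ∑ k ∈ Finset.range (m+2), (k:ℝ) * (cCoeff γ k * cCoeff δ (m+1-k))
        = γ * cCoeff (γ+1+δ) m := by
      rw [Finset.sum_range_succ']
      simp only [Nat.cast_zero, zero_mul, add_zero]
      have step : ∀ j ∈ Finset.range (m+1),
          ((j+1:ℕ):ℝ) * (cCoeff γ (j+1) * cCoeff δ (m+1-(j+1)))
            = γ * (cCoeff (γ+1) j * cCoeff δ (m-j)) := by
        intro j hj
        have h1 : m+1-(j+1) = m-j := by omega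
        rw [h1, Nat.cast_add, Nat.cast_one]
        linear_combination cCoeff δ (m-j) * cCoeff_succ γ hγ j
      rw [Finset.sum_congr rfl step, ← Finset.mul_sum, ih (γ+1) δ (by positivity) hδ]
    have hB : ∑ k ∈ Finset.range (m+2), ((m+1-k:ℕ):ℝ) * (cCoeff γ k * cCoeff δ (m+1-k))
        = δ * cCoeff (γ+(δ+1)) m := by
      rw [Finset.sum_range_succ]
      simp only [Nat.sub_self, Nat.cast_zero, zero_mul, add_zero]
      have step : ∀ k ∈ Finset.range (m+1),
          ((m+1-k:ℕ):ℝ) * (cCoeff γ k * cCoeff δ (m+1-k))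
            = δ * (cCoeff γ k * cCoeff (δ+1) (m-k)) := by
        intro k hk
        have hk' : k ≤ m := by
          have := Finset.mem_range.mp hk; omega
        have h1 : m+1-k = (m-k)+1 := by omega
        have hc : (((m-k)+1:ℕ):ℝ) = ((m-k:ℕ):ℝ)+1 := by push_cast; ring
        rw [h1, hc]
        linear_combination cCoeff γ k * cCoeff_succ δ hδ (m-k)
      rw [Finset.sum_congr rfl step, ← Finset.mul_sum, ih γ (δ+1) hγ (by positivity)]
    rw [hA, hB]
    have hr := cCoeff_succ (γ+δ) (by positivity) m
    rw [hr, show γ+1+δ = γ+δ+1 by ring, show γ+(δ+1) = γ+δ+1 by ring]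
    ring

lemma tri_swap {M : Type*} [AddCommMonoid M] (n : ℕ) (F : ℕ → ℕ → M) :
    ∑ k ∈ Finset.range (n+1), ∑ r ∈ Finset.range (k+1), F k r
      = ∑ r ∈ Finset.range (n+1), ∑ j ∈ Finset.range (n+1-r), F (r+j) r := by
  induction n with
  | zero => simp
  | succ n ih =>
    rw [Finset.sum_range_succ, ih,
      Finset.sum_range_succ (fun r => ∑ j ∈ Finset.range (n+1+1-r), F (r+j) r) (n+1),
      Finset.sum_range_succ (fun r => F (n+1) r) (n+1)]
    have h1 : (∑ j ∈ Finset.range (n+1+1-(n+1)), F ((n+1)+j) (n+1)) = F (n+1) (n+1) := by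
      simp [show n+1+1-(n+1) = 1 by omega]
    rw [h1, ← add_assoc, ← Finset.sum_add_distrib]
    congr 1
    apply Finset.sum_congr rfl
    intro r hr
    have hr' : r ≤ n := by
      have := Finset.mem_range.mp hr; omega
    rw [show n+1+1-r = (n+1-r)+1 by omega, Finset.sum_range_succ,
        show r + (n+1-r) = n+1 by omega]

noncomputable def bCoeff (β : ℝ) : ℕ → ℝ
  | 0 => 1
  | (m+1) => cCoeff β (m+1) - cCoeff β m

lemma sum_bCoeff (β : ℝ) (hβ : 0 < β) (M : ℕ) :
    ∑ j ∈ Finset.range (M+1), bCoeff β j = cCoeff β M := by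
  induction M with
  | zero => simp [bCoeff, cCoeff_zero β hβ]
  | succ M ih => rw [Finset.sum_range_succ, ih]; simp [bCoeff]

lemma conv_bCoeff (β : ℝ) (hβ : 0 < β) (hβ1 : β < 1) (M : ℕ) :
    ∑ j ∈ Finset.range (M+1), cCoeff (1-β) (M-j) * bCoeff β j
      = if M = 0 then 1 else 0 := by
  have h1β : (0:ℝ) < 1-β := by linarith
  match M with
  | 0 => simp [bCoeff, cCoeff_zero _ h1β]
  | (K+1) =>
    have hq : ∀ j, bCoeff β j = cCoeff β j - (if j = 0 then 0 else cCoeff β (j-1)) := by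
      intro j
      match j with
      | 0 => simp [bCoeff, cCoeff_zero β hβ]
      | (j+1) => simp [bCoeff]
    have convK : ∀ m : ℕ, ∑ j ∈ Finset.range (m+1), cCoeff (1-β) (m-j) * cCoeff β j = 1 := by
      intro m
      have hcv := cCoeff_conv m β (1-β) hβ h1β
      rw [show β+(1-β) = 1 by ring, cCoeff_one] at hcv
      exact (Finset.sum_congr rfl (fun j _ => mul_comm _ _)).trans hcv
    have e1 : ∑ j ∈ Finset.range (K+2), cCoeff (1-β) (K+1-j) * bCoeff β j
        = (∑ j ∈ Finset.range (K+2), cCoeff (1-β) (K+1-j) * cCoeff β j)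
          - ∑ j ∈ Finset.range (K+2), cCoeff (1-β) (K+1-j) * (if j = 0 then 0 else cCoeff β (j-1)) := by
      rw [← Finset.sum_sub_distrib]
      apply Finset.sum_congr rfl
      intro j _
      rw [hq j]; ring
    have e2 : ∑ j ∈ Finset.range (K+2), cCoeff (1-β) (K+1-j) * (if j = 0 then 0 else cCoeff β (j-1))
        = ∑ i ∈ Finset.range (K+1), cCoeff (1-β) (K-i) * cCoeff β i := by
      rw [Finset.sum_range_succ']
      simp only [Nat.succ_ne_zero, if_false, if_pos, mul_zero, add_zero, ite_true,
        ite_false, Nat.add_sub_cancel]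
      apply Finset.sum_congr rfl
      intro i _
      rw [show K+1-(i+1) = K-i by omega]
    rw [e1, e2, convK (K+1), convK K]
    simp

/-- Caputo `h`-difference of order `α ∈ (0,1]` of an `ℝ^d`-valued sequence. -/
noncomputable def caputo (h α : ℝ) {d : ℕ} (u : ℕ → Fin d → ℝ) (n : ℕ) : Fin d → ℝ :=
  if α < 1 then
    h ^ (1 - α) • ∑ k ∈ Finset.range (n + 1), cCoeff (1 - α) (n - k) • (h⁻¹ • (u (k + 1) - u k))
  else h⁻¹ • (u (n + 1) - u n)

/-- `X` solves the sequential Caputo initial value problem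
`(C_β(C_α X))(n) = f(n, X(n))`, `X(0) = x_a`, `(C_α X)(0) = x_0`. -/
noncomputable def IsSolIVP (h α β : ℝ) {d : ℕ} (f : ℕ → (Fin d → ℝ) → Fin d → ℝ)
    (xa x0 : Fin d → ℝ) (X : ℕ → Fin d → ℝ) : Prop :=
  (∀ n : ℕ, caputo h β (caputo h α X) n = f n (X n)) ∧ X 0 = xa ∧ caputo h α X 0 = x0

theorem caputo_of_solution (h α β : ℝ) (hh : 0 < h)
    (hα1 : 0 < α) (hα2 : α ≤ 1) (hβ1 : 0 < β) (hβ2 : β ≤ 1)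
    (d : ℕ) (hd : 1 ≤ d) (f : ℕ → (Fin d → ℝ) → Fin d → ℝ) (xa x0 : Fin d → ℝ)
    (X : ℕ → Fin d → ℝ) (hX : IsSolIVP h α β f xa x0 X) (n : ℕ) :
    caputo h α X n = x0 + h ^ β • ∑ r ∈ Finset.range n, cCoeff β (n - 1 - r) • f r (X r) := by
  obtain ⟨heq, hxa, hx0⟩ := hX
  set Y : ℕ → Fin d → ℝ := caputo h α X with hYdef
  rcases lt_or_eq_of_le hβ2 with hβlt | hβeq
  · -- β < 1
    have h1β : (0:ℝ) < 1 - β := by linarith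
    set D : ℕ → Fin d → ℝ :=
      fun k => (h ^ β) • ∑ r ∈ Finset.range (k+1), bCoeff β (k-r) • f r (X r) with hDdef
    have hVolt : ∀ m, ∑ k ∈ Finset.range (m+1), cCoeff (1-β) (m-k) • (Y (k+1) - Y k)
        = (h ^ β) • f m (X m) := by
      intro m
      have e := heq m
      simp only [caputo, if_pos hβlt] at e
      rw [Finset.sum_congr rfl
            (fun k _ => smul_comm (cCoeff (1-β) (m-k)) h⁻¹ (Y (k+1) - Y k)),
          ← Finset.smul_sum, smul_smul] at e
      have hpow : h ^ β * (h ^ (1-β) * h⁻¹) = 1 := by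
        rw [← Real.rpow_neg_one h, ← Real.rpow_add hh, ← Real.rpow_add hh,
          show β + (1-β + -1) = 0 by ring, Real.rpow_zero]
      calc ∑ k ∈ Finset.range (m+1), cCoeff (1-β) (m-k) • (Y (k+1) - Y k)
          = (h ^ β * (h ^ (1-β) * h⁻¹)) •
              ∑ k ∈ Finset.range (m+1), cCoeff (1-β) (m-k) • (Y (k+1) - Y k) := by
            rw [hpow, one_smul]
        _ = (h ^ β) • ((h ^ (1-β) * h⁻¹) •
              ∑ k ∈ Finset.range (m+1), cCoeff (1-β) (m-k) • (Y (k+1) - Y k)) :=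
            mul_smul _ _ _
        _ = (h ^ β) • f m (X m) := by rw [e]
    have hT := conv_bCoeff β hβ1 hβlt
    have hDVolt : ∀ m, ∑ k ∈ Finset.range (m+1), cCoeff (1-β) (m-k) • D k
        = (h ^ β) • f m (X m) := by
      intro m
      have step1 : ∀ k, cCoeff (1-β) (m-k) • D k
          = (h ^ β) • ∑ r ∈ Finset.range (k+1),
              (cCoeff (1-β) (m-k) * bCoeff β (k-r)) • f r (X r) := by
        intro k
        rw [hDdef]
        simp only
        rw [smul_comm, Finset.smul_sum]
        congr 1
        exact Finset.sum_congr rfl fun r _ => smul_smul _ _ _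
      calc ∑ k ∈ Finset.range (m+1), cCoeff (1-β) (m-k) • D k
          = ∑ k ∈ Finset.range (m+1), (h ^ β) • ∑ r ∈ Finset.range (k+1),
              (cCoeff (1-β) (m-k) * bCoeff β (k-r)) • f r (X r) :=
            Finset.sum_congr rfl fun k _ => step1 k
        _ = (h ^ β) • ∑ k ∈ Finset.range (m+1), ∑ r ∈ Finset.range (k+1),
              (cCoeff (1-β) (m-k) * bCoeff β (k-r)) • f r (X r) :=
            (Finset.smul_sum).symm
        _ = (h ^ β) • ∑ r ∈ Finset.range (m+1), ∑ j ∈ Finset.range (m+1-r),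
              (cCoeff (1-β) (m-(r+j)) * bCoeff β ((r+j)-r)) • f r (X r) := by
            rw [tri_swap m (fun k r => (cCoeff (1-β) (m-k) * bCoeff β (k-r)) • f r (X r))]
        _ = (h ^ β) • ∑ r ∈ Finset.range (m+1), (if r = m then f r (X r) else 0) := by
            congr 1
            apply Finset.sum_congr rfl
            intro r hr
            have hr' : r ≤ m := by have := Finset.mem_range.mp hr; omega
            rw [show m+1-r = (m-r)+1 by omega]
            have inner : ∀ j ∈ Finset.range ((m-r)+1),
                (cCoeff (1-β) (m-(r+j)) * bCoeff β ((r+j)-r)) • f r (X r)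
                  = (cCoeff (1-β) ((m-r)-j) * bCoeff β j) • f r (X r) := by
              intro j hj
              rw [show m-(r+j) = (m-r)-j by omega, show (r+j)-r = j by omega]
            rw [Finset.sum_congr rfl inner, ← Finset.sum_smul, hT (m-r)]
            rcases eq_or_ne r m with hrm | hrm
            · simp [hrm]
            · rw [if_neg (by omega : ¬ m - r = 0), if_neg hrm, zero_smul]
        _ = (h ^ β) • f m (X m) := by
            rw [Finset.sum_ite_eq' (Finset.range (m+1)) m (fun r => f r (X r))]
            simp
    have key : ∀ m, Y (m+1) - Y m = D m := by
      intro m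
      induction m using Nat.strong_induction_on with
      | _ m ih =>
        have h1 := hVolt m
        have h2 := hDVolt m
        rw [Finset.sum_range_succ] at h1 h2
        rw [Nat.sub_self, cCoeff_zero _ h1β, one_smul] at h1 h2
        have hsub : ∑ k ∈ Finset.range m, cCoeff (1-β) (m-k) • (Y (k+1) - Y k)
            = ∑ k ∈ Finset.range m, cCoeff (1-β) (m-k) • D k :=
          Finset.sum_congr rfl fun k hk => by rw [ih k (Finset.mem_range.mp hk)]
        rw [eq_sub_of_add_eq' h1, hsub]
        exact (eq_sub_of_add_eq' h2).symm
    have tele : ∀ m, Y m = x0 + ∑ k ∈ Finset.range m, D k := by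
      intro m
      have hsum := Finset.sum_range_sub Y m
      rw [Finset.sum_congr rfl (fun k _ => key k)] at hsum
      calc Y m = Y 0 + (Y m - Y 0) := by abel
        _ = x0 + ∑ k ∈ Finset.range m, D k := by rw [← hsum, hx0]
    rcases Nat.eq_zero_or_pos n with hn | hn
    · subst hn; simpa using tele 0
    · obtain ⟨m, rfl⟩ : ∃ m, n = m + 1 := ⟨n - 1, by omega⟩
      rw [tele (m+1)]
      congr 1
      simp only [hDdef]
      calc ∑ k ∈ Finset.range (m+1),
            (h ^ β) • ∑ r ∈ Finset.range (k+1), bCoeff β (k-r) • f r (X r)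
          = (h ^ β) • ∑ k ∈ Finset.range (m+1), ∑ r ∈ Finset.range (k+1),
              bCoeff β (k-r) • f r (X r) := (Finset.smul_sum).symm
        _ = (h ^ β) • ∑ r ∈ Finset.range (m+1), ∑ j ∈ Finset.range (m+1-r),
              bCoeff β ((r+j)-r) • f r (X r) := by
            rw [tri_swap m (fun k r => bCoeff β (k-r) • f r (X r))]
        _ = (h ^ β) • ∑ r ∈ Finset.range (m+1), cCoeff β (m+1-1-r) • f r (X r) := by
            congr 1
            apply Finset.sum_congr rfl
            intro r hr
            have hr' : r ≤ m := by have := Finset.mem_range.mp hr; omega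
            rw [show m+1-r = (m-r)+1 by omega]
            have inner : ∀ j ∈ Finset.range ((m-r)+1),
                bCoeff β ((r+j)-r) • f r (X r) = bCoeff β j • f r (X r) := by
              intro j hj
              rw [show (r+j)-r = j by omega]
            rw [Finset.sum_congr rfl inner, ← Finset.sum_smul, sum_bCoeff β hβ1 (m-r),
                show m+1-1-r = m-r by omega]
  · -- β = 1
    subst hβeq
    have hstep : ∀ k, Y (k+1) = Y k + h • f k (X k) := by
      intro k
      have e := heq k
      simp only [caputo, lt_self_iff_false, if_false] at e
      have e2 : Y (k+1) - Y k = h • f k (X k) := by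
        calc Y (k+1) - Y k = (h * h⁻¹) • (Y (k+1) - Y k) := by
              rw [mul_inv_cancel₀ hh.ne', one_smul]
          _ = h • (h⁻¹ • (Y (k+1) - Y k)) := mul_smul _ _ _
          _ = h • f k (X k) := by rw [e]
      have := eq_add_of_sub_eq e2
      rw [this]; abel
    have main : ∀ m, Y m = x0 + h • ∑ r ∈ Finset.range m, f r (X r) := by
      intro m
      induction m with
      | zero => simp [hx0]
      | succ m ih => rw [hstep m, ih, Finset.sum_range_succ, smul_add]; abel
    simp only [Real.rpow_one, cCoeff_one, one_smul]
    exact main n
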